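/- Let d ≥ 1 and λ ∈ ℂ with Im λ ≠ 0. Then the map u ↦ □u − λu is a continuous linear bijection of 𝓢(ℝ^{1+d}, ℂ) onto itself with continuous inverse (a continuous linear equivalence of the Schwartz space). -/

import Mathlib

open MeasureTheory SchwartzMap Complex
open scoped SchwartzMap

abbrev Spacetime (d : ℕ) := EuclideanSpace ℝ (Fin (d + 1))

/-- The d'Alembertian `□f = ∂_t² f − Σ_{j=1}^d ∂_{x_j}² f` as a continuous linear operator
on the Schwartz space `𝓢(ℝ^{1+d}, ℂ)`. -/
noncomputable def dAlembertian (d : ℕ) :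
    𝓢(Spacetime d, ℂ) →L[ℂ] 𝓢(Spacetime d, ℂ) :=
  (LineDeriv.lineDerivOpCLM ℂ 𝓢(Spacetime d, ℂ) (EuclideanSpace.single 0 1 : Spacetime d)).comp
      (LineDeriv.lineDerivOpCLM ℂ 𝓢(Spacetime d, ℂ) (EuclideanSpace.single 0 1 : Spacetime d))
    - ∑ j : Fin d,
      (LineDeriv.lineDerivOpCLM ℂ 𝓢(Spacetime d, ℂ) (EuclideanSpace.single j.succ 1 : Spacetime d)).comp
        (LineDeriv.lineDerivOpCLM ℂ 𝓢(Spacetime d, ℂ) (EuclideanSpace.single j.succ 1 : Spacetime d))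

open scoped Nat ContDiff

section TemperateGrowth

variable {E F G : Type*} [NormedAddCommGroup E] [NormedSpace ℝ E]
  [NormedAddCommGroup F] [NormedSpace ℝ F] [NormedAddCommGroup G] [NormedSpace ℝ G]

lemma htg_comp {g : F → G} {f : E → F}
    (hg : Function.HasTemperateGrowth g) (hf : Function.HasTemperateGrowth f) :
    Function.HasTemperateGrowth (g ∘ f) := by
  refine ⟨hg.1.comp hf.1, fun n => ?_⟩
  obtain ⟨k, C, hC, hgb⟩ := hg.norm_iteratedFDeriv_le_uniform n
  obtain ⟨k', C', hC', hfb⟩ := hf.norm_iteratedFDeriv_le_uniform n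
  refine ⟨k * k' + k' * n, (n ! : ℝ) * C * (1 + C') ^ (k + n), fun x => ?_⟩
  have h1x : (1 : ℝ) ≤ 1 + ‖x‖ := le_add_of_nonneg_right (norm_nonneg x)
  have hpow : (1 : ℝ) ≤ (1 + ‖x‖) ^ k' := one_le_pow₀ h1x
  set D : ℝ := (1 + C') * (1 + ‖x‖) ^ k' with hDdef
  have hD1 : (1 : ℝ) ≤ D := by
    have : (1 : ℝ) * 1 ≤ (1 + C') * (1 + ‖x‖) ^ k' := by
      apply mul_le_mul (by linarith) hpow zero_le_one (by linarith)
    simpa using this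
  have hfx : ‖f x‖ ≤ C' * (1 + ‖x‖) ^ k' := by
    simpa using hfb 0 (Nat.zero_le n) x
  have hfx1 : 1 + ‖f x‖ ≤ D := by
    have : 1 + ‖f x‖ ≤ 1 + C' * (1 + ‖x‖) ^ k' := by linarith
    refine this.trans ?_
    rw [hDdef, add_mul, one_mul]
    have : C' * 1 ≤ C' * (1 + ‖x‖) ^ k' := by gcongr
    linarith
  have key : ‖iteratedFDeriv ℝ n (g ∘ f) x‖ ≤ (n ! : ℝ) * (C * (1 + ‖f x‖) ^ k) * D ^ n := by
    apply norm_iteratedFDeriv_comp_le hg.1 hf.1 (mod_cast le_top) x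
    · intro i hi
      exact hgb i hi (f x)
    · intro i hi1 hin
      calc ‖iteratedFDeriv ℝ i f x‖ ≤ C' * (1 + ‖x‖) ^ k' := hfb i hin x
        _ ≤ D := by rw [hDdef, add_mul, one_mul]; nlinarith [pow_nonneg (by linarith : (0:ℝ) ≤ 1 + ‖x‖) k']
        _ ≤ D ^ i := le_self_pow₀ hD1 (by omega)
  refine key.trans ?_
  have hDn : D ^ n = (1 + C') ^ n * ((1 + ‖x‖) ^ (k' * n)) := by
    rw [hDdef, mul_pow, ← pow_mul]
  have hfk : (1 + ‖f x‖) ^ k ≤ (1 + C') ^ k * (1 + ‖x‖) ^ (k * k') := by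
    calc (1 + ‖f x‖) ^ k ≤ D ^ k := by gcongr <;> linarith
      _ = (1 + C') ^ k * (1 + ‖x‖) ^ (k * k') := by rw [hDdef, mul_pow, ← pow_mul, mul_comm k' k]
  calc (n ! : ℝ) * (C * (1 + ‖f x‖) ^ k) * D ^ n
      ≤ (n ! : ℝ) * (C * ((1 + C') ^ k * (1 + ‖x‖) ^ (k * k'))) * ((1 + C') ^ n * ((1 + ‖x‖) ^ (k' * n))) := by
        rw [hDn]; gcongr
    _ = (n ! : ℝ) * C * (1 + C') ^ (k + n) * (1 + ‖x‖) ^ (k * k' + k' * n) := by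
        rw [pow_add, pow_add]; ring

lemma htg_mul {A : Type*} [NormedCommRing A] [NormedAlgebra ℝ A] {f g : E → A}
    (hf : Function.HasTemperateGrowth f) (hg : Function.HasTemperateGrowth g) :
    Function.HasTemperateGrowth (fun x => f x * g x) := by
  refine ⟨hf.1.mul hg.1, fun n => ?_⟩
  obtain ⟨k, C, hC, hfb⟩ := hf.norm_iteratedFDeriv_le_uniform n
  obtain ⟨k', C', hC', hgb⟩ := hg.norm_iteratedFDeriv_le_uniform n
  refine ⟨k + k', 2 ^ n * (C * C'), fun x => ?_⟩
  have h1x : (0 : ℝ) ≤ 1 + ‖x‖ := by positivity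
  calc ‖iteratedFDeriv ℝ n (fun y => f y * g y) x‖
      ≤ ∑ i ∈ Finset.range (n + 1),
        (n.choose i : ℝ) * ‖iteratedFDeriv ℝ i f x‖ * ‖iteratedFDeriv ℝ (n - i) g x‖ :=
        norm_iteratedFDeriv_mul_le hf.1 hg.1 x (mod_cast le_top)
    _ ≤ ∑ i ∈ Finset.range (n + 1),
        (n.choose i : ℝ) * (C * (1 + ‖x‖) ^ k) * (C' * (1 + ‖x‖) ^ k') := by
        apply Finset.sum_le_sum
        intro i hi
        rw [Finset.mem_range, Nat.lt_succ_iff] at hi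
        gcongr
        · exact hfb i hi x
        · exact hgb (n - i) (Nat.sub_le n i) x
    _ = 2 ^ n * (C * C') * (1 + ‖x‖) ^ (k + k') := by
        rw [← Finset.sum_mul, ← Finset.sum_mul, ← Nat.cast_sum, Nat.sum_range_choose]
        rw [pow_add]; push_cast; ring

lemma htg_add {f g : E → F}
    (hf : Function.HasTemperateGrowth f) (hg : Function.HasTemperateGrowth g) :
    Function.HasTemperateGrowth (fun x => f x + g x) := by
  refine ⟨hf.1.add hg.1, fun n => ?_⟩
  obtain ⟨k, C, hC, hfb⟩ := hf.norm_iteratedFDeriv_le_uniform n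
  obtain ⟨k', C', hC', hgb⟩ := hg.norm_iteratedFDeriv_le_uniform n
  refine ⟨k + k', C + C', fun x => ?_⟩
  have h1x : (1 : ℝ) ≤ 1 + ‖x‖ := le_add_of_nonneg_right (norm_nonneg x)
  have : iteratedFDeriv ℝ n (fun x => f x + g x) x
      = iteratedFDeriv ℝ n f x + iteratedFDeriv ℝ n g x :=
    iteratedFDeriv_add_apply (hf.1.contDiffAt.of_le (mod_cast le_top)) (hg.1.contDiffAt.of_le (mod_cast le_top))
  rw [this]
  calc ‖iteratedFDeriv ℝ n f x + iteratedFDeriv ℝ n g x‖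
      ≤ C * (1 + ‖x‖) ^ k + C' * (1 + ‖x‖) ^ k' :=
        (norm_add_le _ _).trans (add_le_add (hfb n le_rfl x) (hgb n le_rfl x))
    _ ≤ (C + C') * (1 + ‖x‖) ^ (k + k') := by
        rw [add_mul]
        have e1 : (1 + ‖x‖) ^ k ≤ (1 + ‖x‖) ^ (k + k') := pow_le_pow_right₀ h1x (by omega)
        have e2 : (1 + ‖x‖) ^ k' ≤ (1 + ‖x‖) ^ (k + k') := pow_le_pow_right₀ h1x (by omega)
        gcongr

lemma htg_sum {ι : Type*} (s : Finset ι) (f : ι → E → F)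
    (h : ∀ i ∈ s, Function.HasTemperateGrowth (f i)) :
    Function.HasTemperateGrowth (fun x => ∑ i ∈ s, f i x) := by
  classical
  induction s using Finset.induction_on with
  | empty => simpa using Function.HasTemperateGrowth.zero (E := E) (F := F)
  | insert _ _ hni ih =>
    rename_i a s
    simp only [Finset.sum_insert hni]
    exact htg_add (h a (Finset.mem_insert_self a s))
      (ih fun i hi => h i (Finset.mem_insert_of_mem hi))

end TemperateGrowth

section OneDim

variable {lam : ℂ}

lemma sub_lam_ne_zero (hlam : lam.im ≠ 0) (t : ℝ) : (t : ℂ) - lam ≠ 0 := by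
  intro h
  apply hlam
  have := congrArg Complex.im h
  simpa using this.symm

lemma htg_aff (lam : ℂ) : Function.HasTemperateGrowth (fun t : ℝ => (t : ℂ) - lam) := by
  have h1 : Function.HasTemperateGrowth (fun t : ℝ => (Complex.ofRealCLM t) + (-lam)) :=
    htg_add Complex.ofRealCLM.hasTemperateGrowth (Function.HasTemperateGrowth.const _)
  simpa [sub_eq_add_neg] using h1

lemma hasDerivAt_ginv (hlam : lam.im ≠ 0) (t : ℝ) :
    HasDerivAt (fun t : ℝ => ((t : ℂ) - lam)⁻¹) (-(((t : ℂ) - lam)⁻¹) ^ 2) t := by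
  have h1 : HasDerivAt (fun t : ℝ => (t : ℂ) - lam) 1 t := by
    simpa using (Complex.ofRealCLM.hasDerivAt (x := t)).sub_const lam
  have h2 : HasDerivAt (fun z : ℂ => z⁻¹) (-(((t : ℂ) - lam) ^ 2)⁻¹) ((t : ℂ) - lam) :=
    hasDerivAt_inv (sub_lam_ne_zero hlam t)
  have h3 := (h2.hasFDerivAt.restrictScalars ℝ).comp_hasDerivAt t h1
  simpa [inv_pow, Function.comp_def] using h3

lemma hasDerivAt_pow_comp {f : ℝ → ℂ} {f' : ℂ} {t : ℝ} (hf : HasDerivAt f f' t) (n : ℕ) :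
    HasDerivAt (fun t => f t ^ (n + 1)) (((n : ℂ) + 1) * f t ^ n * f') t := by
  induction n with
  | zero => simpa using hf
  | succ n ih =>
    have h := ih.mul hf
    have : HasDerivAt (fun t => f t ^ (n + 1) * f t)
        (((n : ℂ) + 1) * f t ^ n * f' * f t + f t ^ (n + 1) * f') t := h
    have heq : (fun t => f t ^ (n + 1) * f t) = fun t => f t ^ (n + 1 + 1) := by
      funext s; ring
    rw [heq] at this
    convert this using 1
    push_cast
    ring

lemma iteratedDeriv_ginv (hlam : lam.im ≠ 0) (n : ℕ) (t : ℝ) :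
    iteratedDeriv n (fun t : ℝ => ((t : ℂ) - lam)⁻¹) t
      = (-1) ^ n * (n ! : ℂ) * (((t : ℂ) - lam)⁻¹) ^ (n + 1) := by
  induction n generalizing t with
  | zero => simp
  | succ n ih =>
    rw [iteratedDeriv_succ]
    have hfun : iteratedDeriv n (fun t : ℝ => ((t : ℂ) - lam)⁻¹)
        = fun t : ℝ => (-1) ^ n * (n ! : ℂ) * (((t : ℂ) - lam)⁻¹) ^ (n + 1) := funext ih
    rw [hfun]
    have hd := ((hasDerivAt_pow_comp (hasDerivAt_ginv hlam t) n).const_mul ((-1) ^ n * (n ! : ℂ)))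
    rw [hd.deriv, Nat.factorial_succ]
    push_cast
    ring

lemma htg_ginv (hlam : lam.im ≠ 0) :
    Function.HasTemperateGrowth (fun t : ℝ => ((t : ℂ) - lam)⁻¹) := by
  have hcd : ContDiff ℝ ∞ (fun t : ℝ => ((t : ℂ) - lam)⁻¹) := by
    apply ContDiff.inv
    · exact (Complex.ofRealCLM.contDiff.sub contDiff_const)
    · exact sub_lam_ne_zero hlam
  refine ⟨hcd, fun n => ?_⟩
  refine ⟨0, (n ! : ℝ) * (|lam.im|⁻¹) ^ (n + 1), fun t => ?_⟩
  have hb : ‖((t : ℂ) - lam)⁻¹‖ ≤ |lam.im|⁻¹ := by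
    rw [norm_inv]
    apply inv_anti₀ (abs_pos.mpr hlam)
    calc |lam.im| = |((t : ℂ) - lam).im| := by simp
      _ ≤ ‖(t : ℂ) - lam‖ := Complex.abs_im_le_norm _
      _ = ‖(t : ℂ) - lam‖ := rfl
  rw [norm_iteratedFDeriv_eq_norm_iteratedDeriv, iteratedDeriv_ginv hlam n t]
  simp only [pow_zero, mul_one]
  rw [norm_mul, norm_mul, norm_pow, norm_pow]
  simp only [norm_neg, norm_one, one_pow, one_mul, Complex.norm_natCast]
  gcongr

section Symbol

open scoped FourierTransform RealInnerProductSpace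

noncomputable def symP (d : ℕ) (ξ : Spacetime d) : ℝ :=
  (2 * Real.pi) ^ 2 * (∑ j : Fin d, ξ j.succ * ξ j.succ)
    + (-(2 * Real.pi) ^ 2) * (ξ 0 * ξ 0)

lemma htg_coord (d : ℕ) (i : Fin (d + 1)) :
    Function.HasTemperateGrowth (fun ξ : Spacetime d => ξ i) := by
  have h := (EuclideanSpace.proj (𝕜 := ℝ) (ι := Fin (d + 1)) i).hasTemperateGrowth
  have he : ⇑(EuclideanSpace.proj (𝕜 := ℝ) (ι := Fin (d + 1)) i) = fun ξ : Spacetime d => ξ i := by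
    funext ξ; rfl
  rwa [he] at h

lemma htg_symP (d : ℕ) : Function.HasTemperateGrowth (symP d) := by
  unfold symP
  apply htg_add
  · exact htg_mul (Function.HasTemperateGrowth.const _)
      (htg_sum Finset.univ _ fun j _ => htg_mul (htg_coord d j.succ) (htg_coord d j.succ))
  · exact htg_mul (Function.HasTemperateGrowth.const _)
      (htg_mul (htg_coord d 0) (htg_coord d 0))

lemma htg_symbol (d : ℕ) (lam : ℂ) :
    Function.HasTemperateGrowth (fun ξ : Spacetime d => ((symP d ξ : ℂ) - lam)) :=
  htg_comp (g := fun t : ℝ => (t : ℂ) - lam) (f := symP d) (htg_aff lam) (htg_symP d)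

lemma htg_symbol_inv (d : ℕ) {lam : ℂ} (hlam : lam.im ≠ 0) :
    Function.HasTemperateGrowth (fun ξ : Spacetime d => ((symP d ξ : ℂ) - lam)⁻¹) :=
  htg_comp (g := fun t : ℝ => ((t : ℂ) - lam)⁻¹) (f := symP d) (htg_ginv hlam) (htg_symP d)

end Symbol

section Fourier

open scoped FourierTransform RealInnerProductSpace

variable {d : ℕ}

lemma fourier_pderiv (f : 𝓢(Spacetime d, ℂ)) (v ξ : Spacetime d) :
    𝓕 ⇑(LineDeriv.lineDerivOpCLM ℂ 𝓢(Spacetime d, ℂ) v f) ξ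
      = (2 * Real.pi * Complex.I * (⟪ξ, v⟫ : ℝ)) * 𝓕 ⇑f ξ := by
  have hint : Integrable (fderiv ℝ ⇑f) := by
    have he : fderiv ℝ ⇑f = ⇑(SchwartzMap.fderivCLM ℝ (Spacetime d) ℂ f) := by
      funext x; exact (SchwartzMap.fderivCLM_apply ℝ f x).symm
    rw [he]
    exact (SchwartzMap.fderivCLM ℝ (Spacetime d) ℂ f).integrable
  have h1 : ⇑(LineDeriv.lineDerivOpCLM ℂ 𝓢(Spacetime d, ℂ) v f) = fun x => fderiv ℝ ⇑f x v :=
    funext fun x => SchwartzMap.lineDerivOp_apply_eq_fderiv v f x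
  rw [h1, ← Real.fourier_continuousLinearMap_apply hint,
    Real.fourier_fderiv f.integrable f.differentiable hint]
  rw [VectorFourier.fourierSMulRight_apply]
  simp only [ContinuousLinearMap.neg_apply, innerSL_apply_apply ℝ, neg_smul, smul_neg, neg_neg]
  rw [smul_eq_mul, Complex.real_smul]
  ring

end Fourier

section Main

open scoped FourierTransform RealInnerProductSpace

variable {d : ℕ}

lemma fourier_pderiv2 (f : 𝓢(Spacetime d, ℂ)) (v ξ : Spacetime d) :
    𝓕 ⇑(LineDeriv.lineDerivOpCLM ℂ 𝓢(Spacetime d, ℂ) v (LineDeriv.lineDerivOpCLM ℂ 𝓢(Spacetime d, ℂ) v f)) ξ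
      = (-(2 * Real.pi) ^ 2 * ((⟪ξ, v⟫ : ℝ) : ℂ) ^ 2) * 𝓕 ⇑f ξ := by
  rw [fourier_pderiv (LineDeriv.lineDerivOpCLM ℂ 𝓢(Spacetime d, ℂ) v f) v ξ, fourier_pderiv f v ξ]
  have hI : (Complex.I : ℂ) ^ 2 = -1 := Complex.I_sq
  push_cast
  ring_nf
  rw [hI]
  ring

lemma schwartz_sum_apply {E F : Type*} [NormedAddCommGroup E] [NormedSpace ℝ E]
    [NormedAddCommGroup F] [NormedSpace ℝ F] {ι : Type*} (s : Finset ι)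
    (f : ι → 𝓢(E, F)) (x : E) : (∑ i ∈ s, f i) x = ∑ i ∈ s, f i x := by
  classical
  induction s using Finset.induction_on with
  | empty => simp
  | insert _ _ hni ih =>
    rename_i a s
    rw [Finset.sum_insert hni, Finset.sum_insert hni, SchwartzMap.add_apply, ih]

lemma inner_single (ξ : Spacetime d) (i : Fin (d + 1)) :
    (⟪ξ, EuclideanSpace.single i (1 : ℝ)⟫ : ℝ) = ξ i := by
  rw [EuclideanSpace.inner_single_right]
  simp

lemma fourier_symbol (lam : ℂ) (u : 𝓢(Spacetime d, ℂ)) (ξ : Spacetime d) :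
    𝓕 ⇑(dAlembertian d u - lam • u) ξ = ((symP d ξ : ℂ) - lam) * 𝓕 ⇑u ξ := by
  have hexp : dAlembertian d u - lam • u
      = LineDeriv.lineDerivOpCLM ℂ 𝓢(Spacetime d, ℂ) (EuclideanSpace.single 0 1 : Spacetime d)
          (LineDeriv.lineDerivOpCLM ℂ 𝓢(Spacetime d, ℂ) (EuclideanSpace.single 0 1 : Spacetime d) u)
        - ∑ j : Fin d, LineDeriv.lineDerivOpCLM ℂ 𝓢(Spacetime d, ℂ) (EuclideanSpace.single j.succ 1 : Spacetime d)
            (LineDeriv.lineDerivOpCLM ℂ 𝓢(Spacetime d, ℂ) (EuclideanSpace.single j.succ 1 : Spacetime d) u)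
        - lam • u := by
    rw [dAlembertian, ContinuousLinearMap.sub_apply, ContinuousLinearMap.sum_apply]
    simp only [ContinuousLinearMap.comp_apply]
  rw [hexp]
  have hF := fourierTransformCLM_apply (𝕜 := ℂ)
    (f := LineDeriv.lineDerivOpCLM ℂ 𝓢(Spacetime d, ℂ) (EuclideanSpace.single 0 1 : Spacetime d)
          (LineDeriv.lineDerivOpCLM ℂ 𝓢(Spacetime d, ℂ) (EuclideanSpace.single 0 1 : Spacetime d) u)
        - ∑ j : Fin d, LineDeriv.lineDerivOpCLM ℂ 𝓢(Spacetime d, ℂ) (EuclideanSpace.single j.succ 1 : Spacetime d)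
            (LineDeriv.lineDerivOpCLM ℂ 𝓢(Spacetime d, ℂ) (EuclideanSpace.single j.succ 1 : Spacetime d) u)
        - lam • u)
  rw [← SchwartzMap.fourier_coe, ← hF, map_sub, map_sub, _root_.map_smul, map_sum]
  rw [SchwartzMap.sub_apply, SchwartzMap.sub_apply, SchwartzMap.smul_apply,
    schwartz_sum_apply]
  rw [fourierTransformCLM_apply, SchwartzMap.fourier_coe, fourier_pderiv2]
  have hsum : ∀ j : Fin d,
      (fourierTransformCLM ℂ (LineDeriv.lineDerivOpCLM ℂ 𝓢(Spacetime d, ℂ) (EuclideanSpace.single j.succ 1 : Spacetime d)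
        (LineDeriv.lineDerivOpCLM ℂ 𝓢(Spacetime d, ℂ) (EuclideanSpace.single j.succ 1 : Spacetime d) u))) ξ
      = (-(2 * Real.pi) ^ 2 * ((ξ j.succ : ℝ) : ℂ) ^ 2) * 𝓕 ⇑u ξ := by
    intro j
    rw [fourierTransformCLM_apply, SchwartzMap.fourier_coe, fourier_pderiv2, inner_single]
  rw [Finset.sum_congr rfl fun j _ => hsum j, fourierTransformCLM_apply, SchwartzMap.fourier_coe, inner_single]
  have hsum2 : (∑ j : Fin d, -(2 * (Real.pi : ℂ)) ^ 2 * ((ξ j.succ : ℝ) : ℂ) ^ 2 * 𝓕 ⇑u ξ)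
      = -(2 * (Real.pi : ℂ)) ^ 2 * (∑ j : Fin d, ((ξ j.succ : ℝ) : ℂ) * ((ξ j.succ : ℝ) : ℂ))
        * 𝓕 ⇑u ξ := by
    rw [Finset.mul_sum, ← Finset.sum_mul]
    congr 1
    exact Finset.sum_congr rfl fun j _ => by ring
  rw [hsum2, symP, smul_eq_mul]
  push_cast
  ring

end Main

section Equiv

open scoped FourierTransform

variable {d : ℕ}

noncomputable def mulSymbolCLM {g : Spacetime d → ℂ} (hg : Function.HasTemperateGrowth g) :
    𝓢(Spacetime d, ℂ) →L[ℝ] 𝓢(Spacetime d, ℂ) :=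
  SchwartzMap.bilinLeftCLM (ContinuousLinearMap.mul ℝ ℂ) hg

lemma mulSymbolCLM_apply {g : Spacetime d → ℂ} (hg : Function.HasTemperateGrowth g)
    (f : 𝓢(Spacetime d, ℂ)) (x : Spacetime d) :
    mulSymbolCLM hg f x = f x * g x := rfl

noncomputable def mulSymbolEquiv (d : ℕ) (lam : ℂ) (hlam : lam.im ≠ 0) :
    𝓢(Spacetime d, ℂ) ≃L[ℂ] 𝓢(Spacetime d, ℂ) where
  toLinearEquiv :=
    { toFun := mulSymbolCLM (htg_symbol d lam)
      map_add' := map_add _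
      map_smul' := fun c f => by
        ext x
        simp only [mulSymbolCLM_apply, SchwartzMap.smul_apply, RingHom.id_apply, smul_eq_mul]
        ring
      invFun := mulSymbolCLM (htg_symbol_inv d hlam)
      left_inv := fun f => by
        ext x
        simp only [mulSymbolCLM_apply]
        field_simp [sub_lam_ne_zero hlam (symP d x)]
      right_inv := fun f => by
        ext x
        simp only [mulSymbolCLM_apply]
        field_simp [sub_lam_ne_zero hlam (symP d x)] }
  continuous_toFun := (mulSymbolCLM (htg_symbol d lam)).continuous
  continuous_invFun := (mulSymbolCLM (htg_symbol_inv d hlam)).continuous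

lemma mulSymbolEquiv_apply (d : ℕ) (lam : ℂ) (hlam : lam.im ≠ 0)
    (f : 𝓢(Spacetime d, ℂ)) (x : Spacetime d) :
    mulSymbolEquiv d lam hlam f x = f x * ((symP d x : ℂ) - lam) := rfl

end Equiv

/-- For `Im λ ≠ 0`, the map `u ↦ □u − λu` is a continuous linear equivalence of the
Schwartz space `𝓢(ℝ^{1+d}, ℂ)` onto itself (a continuous linear bijection with
continuous inverse). -/
theorem dAlembertian_sub_lambda_equiv (d : ℕ) (hd : 1 ≤ d)
    (lam : ℂ) (hlam : lam.im ≠ 0) :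
    ∃ T : 𝓢(Spacetime d, ℂ) ≃L[ℂ] 𝓢(Spacetime d, ℂ),
      ∀ u : 𝓢(Spacetime d, ℂ), T u = dAlembertian d u - lam • u := by
  refine ⟨((FourierTransform.fourierCLE ℂ 𝓢(Spacetime d, ℂ)).trans (mulSymbolEquiv d lam hlam)).trans
    (FourierTransform.fourierCLE ℂ 𝓢(Spacetime d, ℂ)).symm, fun u => ?_⟩
  simp only [ContinuousLinearEquiv.trans_apply]
  rw [← (FourierTransform.fourierCLE ℂ 𝓢(Spacetime d, ℂ)).symm_apply_apply (dAlembertian d u - lam • u)]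
  congr 1
  ext ξ
  rw [mulSymbolEquiv_apply, FourierTransform.fourierCLE_apply, FourierTransform.fourierCLE_apply]
  rw [SchwartzMap.fourier_coe, SchwartzMap.fourier_coe, fourier_symbol]
  ring
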